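/- Let A be an integral domain with fraction field K, and let B be a commutative A-algebra which is an integral domain, is flat as an A-module, and for which the structure map A → B is injective. Then for every intermediate ring R with A ⊆ R ⊆ K, the ring R ⊗_A B is an integral domain. -/

import Mathlib

open scoped TensorProduct

/-- Let `A` be an integral domain with fraction field `K`, and let `B`
be a commutative `A`-algebra which is an integral domain, flat as an `A`-module, and with
injective structure map `A → B`.  Then for every intermediate ring `A ⊆ R ⊆ K` (an
`A`-subalgebra of `K`), the ring `R ⊗[A] B` is an integral domain. -/
theorem statement13 {A K B : Type*} [CommRing A] [IsDomain A]
    [Field K] [Algebra A K] [IsFractionRing A K]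
    [CommRing B] [IsDomain B] [Algebra A B] [Module.Flat A B]
    (hinj : Function.Injective (algebraMap A B))
    (R : Subalgebra A K) :
    IsDomain (R ⊗[A] B) := by
  letI : Algebra B (K ⊗[A] B) := Algebra.TensorProduct.rightAlgebra
  haveI : IsScalarTower A B (K ⊗[A] B) := Algebra.TensorProduct.right_isScalarTower
  haveI : IsLocalization (Algebra.algebraMapSubmonoid B (nonZeroDivisors A)) (K ⊗[A] B) := by
    rw [← isLocalizedModule_iff_isLocalization,
      isLocalizedModule_iff_isBaseChange (S := nonZeroDivisors A) (A := K)]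
    exact TensorProduct.isBaseChange A B K
  haveI : IsDomain (K ⊗[A] B) := by
    refine IsLocalization.isDomain_of_le_nonZeroDivisors (K ⊗[A] B)
      (M := Algebra.algebraMapSubmonoid B (nonZeroDivisors A)) ?_
    exact map_le_nonZeroDivisors_of_injective _ hinj le_rfl
  have hval : Function.Injective (R.val : R →ₐ[A] K) := Subtype.val_injective
  have hinj2 : Function.Injective
      (Algebra.TensorProduct.map R.val (AlgHom.id A B) : R ⊗[A] B →ₐ[A] K ⊗[A] B) := by
    have : (Algebra.TensorProduct.map R.val (AlgHom.id A B) : R ⊗[A] B →ₐ[A] K ⊗[A] B).toLinearMap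
        = LinearMap.rTensor B R.val.toLinearMap := by
      ext x b
      rfl
    have h := Module.Flat.rTensor_preserves_injective_linearMap (M := B)
      (R.val.toLinearMap) hval
    rw [← this] at h
    exact h
  exact Function.Injective.isDomain
    (Algebra.TensorProduct.map R.val (AlgHom.id A B)).toRingHom hinj2
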